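/- Let g be a positive integer, let τ be a symmetric g×g complex matrix whose imaginary part is positive definite, let ε, δ ∈ {0,1}^g, and let z ∈ ℂ^g. Then the family (exp(πi (n+ε/2)ᵀτ(n+ε/2) + 2πi (n+ε/2)ᵀ(z+δ/2)))_{n ∈ ℤ^g} is summable (the series defining the theta function with characteristic [ε;δ] converges absolutely). -/

import Mathlib

set_option maxHeartbeats 800000

open Complex

lemma aux_pi : ∀ (g : ℕ) (f : Fin g → ℤ → ℝ), (∀ i m, 0 ≤ f i m) → (∀ i, Summable (f i)) →
    Summable fun n : Fin g → ℤ => ∏ i, f i (n i) := by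
  intro g
  induction g with
  | zero => intro f _ _; exact .of_finite
  | succ g ih =>
    intro f h0 hs
    have H : Summable fun p : ℤ × (Fin g → ℤ) => f 0 p.1 * ∏ i : Fin g, f i.succ (p.2 i) := by
      apply Summable.mul_of_nonneg (hs 0) (ih (fun i => f i.succ) (fun i m => h0 _ _)
        (fun i => hs _))
      · exact fun m => h0 _ _
      · exact fun y => Finset.prod_nonneg fun i _ => h0 _ _
    have H2 : Summable ((fun n : Fin (g+1) → ℤ => ∏ i, f i (n i))
        ∘ (Fin.consEquiv (fun _ : Fin (g+1) => ℤ))) := by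
      refine H.congr fun p => ?_
      simp only [Function.comp_apply, Fin.consEquiv_apply, Fin.prod_univ_succ, Fin.cons_zero,
        Fin.cons_succ]
    exact ((Fin.consEquiv (fun _ : Fin (g+1) => ℤ)).summable_iff).1 H2

lemma aux_one {a : ℝ} (ha : 0 < a) (b v : ℝ) :
    Summable fun m : ℤ => Real.exp (-a * ((m : ℝ) + v)^2 + b * |(m : ℝ) + v|) := by
  have hT : 0 < a / Real.pi := div_pos ha Real.pi_pos
  have key := (summable_pow_mul_jacobiTheta₂_term_bound ((2*a*|v| + |b|)/(2*Real.pi)) hT 0).mul_left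
      (Real.exp (|b| * |v|))
  refine key.of_nonneg_of_le (fun m => (Real.exp_pos _).le) fun m => ?_
  rw [pow_zero, one_mul, ← Real.exp_add]
  apply Real.exp_le_exp.mpr
  push_cast
  have h1 : ((m:ℝ) + v)^2 ≥ (m:ℝ)^2 - 2 * |(m:ℝ)| * |v| := by
    nlinarith [sq_nonneg ((m:ℝ) + v), abs_mul_abs_self (m:ℝ), abs_mul_abs_self v,
      neg_abs_le (m:ℝ), le_abs_self (m:ℝ), neg_abs_le v, le_abs_self v,
      abs_nonneg (m:ℝ), abs_nonneg v]
  have h3 : b * |(m:ℝ) + v| ≤ |b| * |(m:ℝ)| + |b| * |v| := by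
    have h2 : |(m:ℝ) + v| ≤ |(m:ℝ)| + |v| := abs_add_le _ _
    have h4 : b * |(m:ℝ)+v| ≤ |b| * |(m:ℝ)+v| :=
      mul_le_mul_of_nonneg_right (le_abs_self b) (abs_nonneg _)
    nlinarith [abs_nonneg b]
  have e1 : |b| * |v| + -Real.pi * (a/Real.pi * (m:ℝ)^2
        - 2 * ((2 * a * |v| + |b|)/(2*Real.pi)) * |(m:ℝ)|)
      = |b| * |v| + (-a*(m:ℝ)^2 + (2 * a * |v| + |b|) * |(m:ℝ)|) := by
    field_simp
    ring
  rw [e1]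
  nlinarith [mul_le_mul_of_nonneg_left h1 ha.le]

lemma aux_lb {g : ℕ} (hg : 0 < g) {Y : Matrix (Fin g) (Fin g) ℝ} (hY : Y.PosDef) :
    ∃ c > 0, ∀ x : Fin g → ℝ, c * ∑ i, (x i)^2 ≤ ∑ i, ∑ j, x i * Y i j * x j := by
  set q : (Fin g → ℝ) → ℝ := fun x => ∑ i, ∑ j, x i * Y i j * x j with hq
  have hqpos : ∀ x : Fin g → ℝ, x ≠ 0 → 0 < q x := by
    intro x hx
    have := hY.dotProduct_mulVec_pos hx
    simpa [hq, dotProduct, Matrix.mulVec, Finset.mul_sum, mul_assoc] using this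
  have hqsmul : ∀ (r : ℝ) (x : Fin g → ℝ), q (r • x) = r^2 * q x := by
    intro r x
    simp only [hq, Pi.smul_apply, smul_eq_mul, Finset.mul_sum]
    refine Finset.sum_congr rfl fun i _ => Finset.sum_congr rfl fun j _ => by ring
  haveI : Nonempty (Fin g) := ⟨⟨0, hg⟩⟩
  have hqcont : Continuous fun x : EuclideanSpace ℝ (Fin g) => q x := by
    apply continuous_finset_sum; intro i _
    apply continuous_finset_sum; intro j _
    have h1 : Continuous fun x : EuclideanSpace ℝ (Fin g) => x i :=
      (continuous_apply i).comp (PiLp.continuous_ofLp (p := 2) (β := fun _ : Fin g => ℝ))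
    have h2 : Continuous fun x : EuclideanSpace ℝ (Fin g) => x j :=
      (continuous_apply j).comp (PiLp.continuous_ofLp (p := 2) (β := fun _ : Fin g => ℝ))
    exact (h1.mul continuous_const).mul h2
  have hsne : (Metric.sphere (0 : EuclideanSpace ℝ (Fin g)) 1).Nonempty := by
    obtain ⟨x, hx⟩ := exists_norm_eq (EuclideanSpace ℝ (Fin g)) (zero_le_one' ℝ)
    exact ⟨x, by simpa using hx⟩
  obtain ⟨x₀, hx₀mem, hmin'⟩ :=
    (isCompact_sphere (0 : EuclideanSpace ℝ (Fin g)) 1).exists_isMinOn hsne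
      hqcont.continuousOn
  have hmin : ∀ y ∈ Metric.sphere (0 : EuclideanSpace ℝ (Fin g)) 1, q x₀ ≤ q y :=
    fun y hy => hmin' hy
  have hx₀norm : ‖x₀‖ = 1 := by simpa using mem_sphere_zero_iff_norm.mp hx₀mem
  have hx₀ne : (x₀ : Fin g → ℝ) ≠ 0 := by
    intro h
    rw [show x₀ = 0 from (WithLp.ofLp_eq_zero (p := 2)).mp h] at hx₀norm  -- may need fixing
    simp at hx₀norm
  refine ⟨q x₀, hqpos _ hx₀ne, fun x => ?_⟩
  rcases eq_or_ne x 0 with rfl | hx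
  · simp [hq]
  · set s : ℝ := Real.sqrt (∑ i, (x i)^2) with hs
    have hsum_pos : 0 < ∑ i, (x i)^2 := by
      have : ∃ i, x i ≠ 0 := by
        by_contra h
        push_neg at h
        exact hx (funext h)
      obtain ⟨i, hi⟩ := this
      exact Finset.sum_pos' (fun j _ => sq_nonneg _)
        ⟨i, Finset.mem_univ i, by positivity⟩
    have hspos : 0 < s := Real.sqrt_pos.mpr hsum_pos
    set u : Fin g → ℝ := s⁻¹ • x with hu
    have husum : ∑ i, (u i)^2 = 1 := by
      simp only [hu, Pi.smul_apply, smul_eq_mul, mul_pow, ← Finset.mul_sum]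
      rw [inv_pow, hs, Real.sq_sqrt hsum_pos.le, inv_mul_cancel₀ hsum_pos.ne']
    have hunorm : ‖(WithLp.equiv 2 (Fin g → ℝ)).symm u‖ = 1 := by
      rw [EuclideanSpace.norm_eq]
      simp only [WithLp.equiv_symm_apply, WithLp.ofLp_toLp, PiLp.toLp_apply, Real.norm_eq_abs, _root_.sq_abs]
      rw [husum, Real.sqrt_one]
    have hqu : q x₀ ≤ q u :=
      hmin _ (mem_sphere_zero_iff_norm.mpr hunorm)
    have hqux : q u = s⁻¹^2 * q x := hqsmul s⁻¹ x
    have : q x₀ * 1 ≤ q x / s^2 := by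
      rw [mul_one]
      calc q x₀ ≤ q u := hqu
      _ = q x / s^2 := by rw [hqux]; field_simp
    calc q x₀ * ∑ i, (x i)^2 = q x₀ * s^2 := by rw [hs, Real.sq_sqrt hsum_pos.le]
    _ ≤ (q x / s^2) * s^2 := by nlinarith [sq_nonneg s]
    _ = q x := by field_simp


lemma re_mul_I_aux (r : ℝ) (w : ℂ) : ((r : ℂ) * Complex.I * w).re = -(r * w.im) := by
  simp [Complex.mul_re, Complex.mul_im]

lemma im_triple_aux (a b : ℝ) (w : ℂ) : ((a : ℂ) * w * (b : ℂ)).im = a * w.im * b := by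
  simp [Complex.mul_im]

/-- For `τ` in the Siegel upper half-space, characteristics
`ε, δ ∈ {0,1}^g` and any `z ∈ ℂ^g`, the series defining the theta function with
characteristic `[ε;δ]` converges absolutely. -/
theorem theta_char_summable (g : ℕ) (hg : 0 < g)
    (τ : Matrix (Fin g) (Fin g) ℂ) (hsym : τ.IsSymm)
    (hpos : (Matrix.of fun i j => (τ i j).im).PosDef)
    (ε δ : Fin g → ℤ) (hε : ∀ i, ε i = 0 ∨ ε i = 1) (hδ : ∀ i, δ i = 0 ∨ δ i = 1)
    (z : Fin g → ℂ) :
    Summable fun n : Fin g → ℤ =>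
      Complex.exp ((Real.pi : ℂ) * Complex.I *
          (∑ i, ∑ j, ((n i : ℂ) + (ε i : ℂ) / 2) * τ i j * ((n j : ℂ) + (ε j : ℂ) / 2))
        + 2 * (Real.pi : ℂ) * Complex.I *
          ∑ i, ((n i : ℂ) + (ε i : ℂ) / 2) * (z i + (δ i : ℂ) / 2)) := by
  obtain ⟨c, hc, hcb⟩ := aux_lb hg hpos
  set X : (Fin g → ℤ) → Fin g → ℝ := fun n i => (n i : ℝ) + (ε i : ℝ) / 2 with hX
  set f : Fin g → ℤ → ℝ := fun i m =>
    Real.exp (-(Real.pi * c) * ((m : ℝ) + (ε i : ℝ) / 2) ^ 2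
      + (2 * Real.pi * |(z i).im|) * |(m : ℝ) + (ε i : ℝ) / 2|) with hf
  have hfs : Summable fun n : Fin g → ℤ => ∏ i, f i (n i) := by
    refine aux_pi g f (fun i m => (Real.exp_pos _).le) fun i => ?_
    exact aux_one (by positivity) _ _
  apply Summable.of_norm
  refine hfs.of_nonneg_of_le (fun n => norm_nonneg _) fun n => ?_
  rw [Complex.norm_exp]
  have hprod : ∏ i, f i (n i) = Real.exp (∑ i, (-(Real.pi * c) * (X n i) ^ 2
      + (2 * Real.pi * |(z i).im|) * |X n i|)) := by
    rw [Real.exp_sum]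
  rw [hprod]
  apply Real.exp_le_exp.mpr
  -- compute the real part
  have hcast : ∀ i, ((n i : ℂ) + (ε i : ℂ) / 2) = ((X n i : ℝ) : ℂ) := by
    intro i; simp only [hX]; push_cast; ring
  have hQ : (∑ i, ∑ j, ((n i : ℂ) + (ε i : ℂ) / 2) * τ i j * ((n j : ℂ) + (ε j : ℂ) / 2)).im
      = ∑ i, ∑ j, X n i * (τ i j).im * X n j := by
    rw [Complex.im_sum]
    refine Finset.sum_congr rfl fun i _ => ?_
    rw [Complex.im_sum]
    refine Finset.sum_congr rfl fun j _ => ?_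
    rw [hcast i, hcast j, im_triple_aux]
  have hL : (∑ i, ((n i : ℂ) + (ε i : ℂ) / 2) * (z i + (δ i : ℂ) / 2)).im
      = ∑ i, X n i * (z i).im := by
    rw [Complex.im_sum]
    refine Finset.sum_congr rfl fun i _ => ?_
    rw [hcast i]
    have : ((δ i : ℂ) / 2) = (((δ i : ℝ) / 2 : ℝ) : ℂ) := by push_cast; ring
    rw [this]
    simp [Complex.mul_im]
  have hre : ((Real.pi : ℂ) * Complex.I *
          (∑ i, ∑ j, ((n i : ℂ) + (ε i : ℂ) / 2) * τ i j * ((n j : ℂ) + (ε j : ℂ) / 2))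
        + 2 * (Real.pi : ℂ) * Complex.I *
          ∑ i, ((n i : ℂ) + (ε i : ℂ) / 2) * (z i + (δ i : ℂ) / 2)).re
      = -(Real.pi * ∑ i, ∑ j, X n i * (τ i j).im * X n j)
        + -(2 * Real.pi * ∑ i, X n i * (z i).im) := by
    rw [Complex.add_re, re_mul_I_aux, hQ]
    have h2 : (2 * (Real.pi : ℂ) * Complex.I *
        ∑ i, ((n i : ℂ) + (ε i : ℂ) / 2) * (z i + (δ i : ℂ) / 2))
        = ((2 * Real.pi : ℝ) : ℂ) * Complex.I *
        ∑ i, ((n i : ℂ) + (ε i : ℂ) / 2) * (z i + (δ i : ℂ) / 2) := by push_cast; ring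
    rw [h2, re_mul_I_aux, hL]
  rw [hre]
  -- now a real inequality
  have key1 : c * ∑ i, (X n i) ^ 2 ≤ ∑ i, ∑ j, X n i * (τ i j).im * X n j := hcb (X n)
  have key2 : ∀ i, -(2 * Real.pi * (X n i * (z i).im))
      ≤ (2 * Real.pi * |(z i).im|) * |X n i| := by
    intro i
    have h1 : -(X n i * (z i).im) ≤ |X n i * (z i).im| := neg_le_abs _
    have h2 : |X n i * (z i).im| = |X n i| * |(z i).im| := abs_mul _ _
    nlinarith [Real.pi_pos]
  calc -(Real.pi * ∑ i, ∑ j, X n i * (τ i j).im * X n j)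
        + -(2 * Real.pi * ∑ i, X n i * (z i).im)
      ≤ -(Real.pi * (c * ∑ i, (X n i) ^ 2)) + ∑ i, (2 * Real.pi * |(z i).im|) * |X n i| := by
        have hA : -(Real.pi * ∑ i, ∑ j, X n i * (τ i j).im * X n j)
            ≤ -(Real.pi * (c * ∑ i, (X n i) ^ 2)) := by
          nlinarith [Real.pi_pos]
        have hB : -(2 * Real.pi * ∑ i, X n i * (z i).im)
            ≤ ∑ i, (2 * Real.pi * |(z i).im|) * |X n i| := by
          rw [Finset.mul_sum, ← Finset.sum_neg_distrib]
          exact Finset.sum_le_sum fun i _ => key2 i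
        linarith
    _ = ∑ i, (-(Real.pi * c) * (X n i) ^ 2 + (2 * Real.pi * |(z i).im|) * |X n i|) := by
        rw [Finset.sum_add_distrib]
        congr 1
        simp only [neg_mul, Finset.sum_neg_distrib, ← Finset.mul_sum]
        ring
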